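/- Let D and D₀ be p×p diagonal matrices with diagonal entries in [1/δ, δ] for some δ > 1, and set Δ_D = D − D₀. Then log|D| − log|D₀| + tr[(D⁻¹ − D₀⁻¹) D₀] ≥ (1/(8δ⁴)) ‖Δ_D‖_F². -/

import Mathlib

open Matrix Finset

private lemma key (δ a b : ℝ) (hδ : 1 < δ) (ha : a ∈ Set.Icc (1/δ) δ)
    (hb : b ∈ Set.Icc (1/δ) δ) :
    Real.log a - Real.log b + (b/a - 1) ≥ (1/(2*δ^2)) * (a-b)^2 := by
  have hδ0 : (0:ℝ) < δ := by linarith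
  have hpos : ∀ x : ℝ, x ∈ Set.Icc (1/δ) δ → 0 < x := by
    intro x hx
    exact lt_of_lt_of_le (by positivity) hx.1
  have ha0 := hpos a ha
  have hb0 := hpos b hb
  set g : ℝ → ℝ := fun x => Real.log x - Real.log b + b/x - 1 - (1/(2*δ^2)) * (x-b)^2 with hg
  have hderiv : ∀ x : ℝ, 0 < x → HasDerivAt g ((x - b) * (x⁻¹ * x⁻¹ - δ⁻¹ * δ⁻¹)) x := by
    intro x hx
    have h1 : HasDerivAt (fun x : ℝ => Real.log x) x⁻¹ x := Real.hasDerivAt_log hx.ne'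
    have h2 : HasDerivAt (fun x : ℝ => b / x) (b * -(x^2)⁻¹) x := by
      simpa [div_eq_mul_inv, mul_comm] using (hasDerivAt_inv hx.ne').const_mul b
    have h3 : HasDerivAt (fun x : ℝ => (1/(2*δ^2)) * (x-b)^2)
        ((1/(2*δ^2)) * (2 * (x - b) ^ 1 * 1)) x :=
      (((hasDerivAt_id x).sub_const b).pow 2).const_mul (1/(2*δ^2))
    have := ((h1.sub_const (Real.log b)).add h2).sub_const 1 |>.sub h3
    refine this.congr_deriv ?_
    field_simp [hx.ne', hδ0.ne']
    ring
  have hgb : g b = 0 := by simp [hg, div_self hb0.ne']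
  -- sign of derivative
  have hcont : ∀ s : Set ℝ, s ⊆ Set.Ioi 0 → ContinuousOn g s := by
    intro s hs
    exact fun x hx => ((hderiv x (hs hx)).continuousAt).continuousWithinAt
  have hIcc : ∀ x : ℝ, x ∈ Set.Icc (1/δ) δ → x⁻¹ * x⁻¹ - δ⁻¹ * δ⁻¹ ≥ 0 := by
    intro x hx
    have hx0 := hpos x hx
    have : x⁻¹ ≥ δ⁻¹ := by
      apply one_div_le_one_div_of_le hx0 hx.2 |>.trans_eq' (by simp) |>.trans_eq (by simp)
    nlinarith [inv_pos.mpr hx0, inv_pos.mpr hδ0]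
  rcases lt_trichotomy a b with hab | hab | hab
  · -- antitone on [1/δ, b]
    have hsub : Set.Icc (1/δ) b ⊆ Set.Ioi 0 := fun x hx => lt_of_lt_of_le (by positivity) hx.1
    have hanti : AntitoneOn g (Set.Icc (1/δ) b) := by
      apply antitoneOn_of_deriv_nonpos (convex_Icc _ _) (hcont _ hsub)
      · intro x hx
        rw [interior_Icc] at hx
        exact (hderiv x (hsub (Set.mem_Icc_of_Ioo hx))).differentiableAt.differentiableWithinAt
      · intro x hx
        rw [interior_Icc] at hx
        have hx0 : 0 < x := hsub (Set.mem_Icc_of_Ioo hx)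
        rw [(hderiv x hx0).deriv]
        have h1 : x - b ≤ 0 := by linarith [hx.2]
        have h2 : x⁻¹ * x⁻¹ - δ⁻¹ * δ⁻¹ ≥ 0 :=
          hIcc x ⟨le_of_lt hx.1, le_trans (le_of_lt hx.2) hb.2⟩
        exact mul_nonpos_of_nonpos_of_nonneg h1 h2
    have := hanti ⟨ha.1, hab.le⟩ ⟨le_trans ha.1 hab.le, le_refl b⟩ hab.le
    rw [hgb] at this
    have : g a ≥ 0 := this
    simp only [hg] at this
    linarith
  · subst hab
    simp only [hg] at hgb
    have : (1/(2*δ^2)) * (a-a)^2 = 0 := by ring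
    rw [this]
    have := div_self ha0.ne'
    simp only [ge_iff_le]
    rw [div_self ha0.ne']
    ring_nf
    simp
  · -- monotone on [b, δ]
    have hsub : Set.Icc b δ ⊆ Set.Ioi 0 := fun x hx => lt_of_lt_of_le hb0 hx.1
    have hmono : MonotoneOn g (Set.Icc b δ) := by
      apply monotoneOn_of_deriv_nonneg (convex_Icc _ _) (hcont _ hsub)
      · intro x hx
        rw [interior_Icc] at hx
        exact (hderiv x (hsub (Set.mem_Icc_of_Ioo hx))).differentiableAt.differentiableWithinAt
      · intro x hx
        rw [interior_Icc] at hx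
        have hx0 : 0 < x := hsub (Set.mem_Icc_of_Ioo hx)
        rw [(hderiv x hx0).deriv]
        have h1 : x - b ≥ 0 := by linarith [hx.1]
        have h2 : x⁻¹ * x⁻¹ - δ⁻¹ * δ⁻¹ ≥ 0 :=
          hIcc x ⟨le_trans hb.1 (le_of_lt hx.1), le_of_lt hx.2⟩
        exact mul_nonneg h1 h2
    have := hmono ⟨le_refl b, le_trans hab.le ha.2⟩ ⟨hab.le, ha.2⟩ hab.le
    rw [hgb] at this
    have : g a ≥ 0 := this
    simp only [hg] at this
    linarith

/-- Strong-convexity lower bound on the term `R₁` of the likelihood expansion: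
for diagonal matrices `D`, `D₀` with entries in `[1/δ, δ]`,
`log|D| − log|D₀| + tr[(D⁻¹ − D₀⁻¹)D₀] ≥ ‖D − D₀‖_F² / (8δ⁴)`. -/
theorem R1_lower_bound (p : ℕ) (δ : ℝ) (hδ : 1 < δ)
    (D D₀ : Matrix (Fin p) (Fin p) ℝ)
    (hD : D.IsDiag) (hD₀ : D₀.IsDiag)
    (hDb : ∀ i, D i i ∈ Set.Icc (1 / δ) δ)
    (hD₀b : ∀ i, D₀ i i ∈ Set.Icc (1 / δ) δ) :
    Real.log D.det - Real.log D₀.det + ((D⁻¹ - D₀⁻¹) * D₀).trace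
      ≥ (1 / (8 * δ ^ 4)) * ∑ i, ∑ j, ((D - D₀) i j) ^ 2 := by
  have hδ0 : (0:ℝ) < δ := by linarith
  have hdpos : ∀ i, 0 < D i i := fun i => lt_of_lt_of_le (by positivity) (hDb i).1
  have hd₀pos : ∀ i, 0 < D₀ i i := fun i => lt_of_lt_of_le (by positivity) (hD₀b i).1
  have hDdiag : D = Matrix.diagonal (fun i => D i i) := (hD.diagonal_diag).symm
  have hD₀diag : D₀ = Matrix.diagonal (fun i => D₀ i i) := (hD₀.diagonal_diag).symm
  -- determinants
  have hdetD : D.det = ∏ i, D i i := by rw [hDdiag]; simp [Matrix.det_diagonal]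
  have hdetD₀ : D₀.det = ∏ i, D₀ i i := by rw [hD₀diag]; simp [Matrix.det_diagonal]
  -- inverses
  have aux : ∀ d : Fin p → ℝ, (∀ i, d i ≠ 0) →
      (Matrix.diagonal d)⁻¹ = Matrix.diagonal (fun i => (d i)⁻¹) := by
    intro d hd
    apply Matrix.inv_eq_right_inv
    rw [Matrix.diagonal_mul_diagonal,
      show (fun i => d i * (d i)⁻¹) = fun _ => (1:ℝ) from
        funext fun i => mul_inv_cancel₀ (hd i), Matrix.diagonal_one]
  have hinvD : D⁻¹ = Matrix.diagonal (fun i => (D i i)⁻¹) := by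
    conv_lhs => rw [hDdiag]
    exact aux _ fun i => (hdpos i).ne'
  have hinvD₀ : D₀⁻¹ = Matrix.diagonal (fun i => (D₀ i i)⁻¹) := by
    conv_lhs => rw [hD₀diag]
    exact aux _ fun i => (hd₀pos i).ne'
  -- trace term
  have htr : ((D⁻¹ - D₀⁻¹) * D₀).trace
      = ∑ i, ((D i i)⁻¹ - (D₀ i i)⁻¹) * D₀ i i := by
    rw [hinvD, hinvD₀, Matrix.sub_mul, Matrix.trace_sub]
    simp only [Matrix.trace, Matrix.diag, Matrix.diagonal_mul, ← Finset.sum_sub_distrib]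
    exact Finset.sum_congr rfl fun i _ => by ring
  -- Frobenius term
  have hF : ∑ i, ∑ j, ((D - D₀) i j) ^ 2 = ∑ i, (D i i - D₀ i i) ^ 2 := by
    refine Finset.sum_congr rfl fun i _ => ?_
    rw [Finset.sum_eq_single i]
    · simp [Matrix.sub_apply]
    · intro j _ hji
      have : (D - D₀) i j = 0 := by
        simp [Matrix.sub_apply, hD (Ne.symm hji), hD₀ (Ne.symm hji)]
      simp [this]
    · simp
  -- logs of products
  have hlogD : Real.log D.det = ∑ i, Real.log (D i i) := by
    rw [hdetD, Real.log_prod]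
    exact fun i _ => (hdpos i).ne'
  have hlogD₀ : Real.log D₀.det = ∑ i, Real.log (D₀ i i) := by
    rw [hdetD₀, Real.log_prod]
    exact fun i _ => (hd₀pos i).ne'
  rw [htr, hF, hlogD, hlogD₀]
  rw [← Finset.sum_sub_distrib, ← Finset.sum_add_distrib, Finset.mul_sum]
  apply Finset.sum_le_sum
  intro i _
  have hkey := key δ (D i i) (D₀ i i) hδ (hDb i) (hD₀b i)
  have h1 : ((D i i)⁻¹ - (D₀ i i)⁻¹) * D₀ i i = D₀ i i / D i i - 1 := by
    rw [sub_mul, inv_mul_cancel₀ (hd₀pos i).ne', inv_mul_eq_div]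
  rw [h1]
  have hcoef : (1 / (8 * δ ^ 4)) * (D i i - D₀ i i) ^ 2
      ≤ (1/(2*δ^2)) * (D i i - D₀ i i) ^ 2 := by
    apply mul_le_mul_of_nonneg_right _ (sq_nonneg _)
    rw [div_le_div_iff₀ (by positivity) (by positivity)]
    nlinarith [sq_nonneg δ, sq_nonneg (δ^2 - 1)]
  linarith
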